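/- (Equation (T2-final) of the paper.) With D⁺, E, B(τ), X̃, G̃, Q_{ij}(τ) as described, assume X̃ᵀX̃ and Q₀₁(τ) are invertible, and let μ₁, …, μₙ be the eigenvalues (with multiplicity) of the real symmetric positive semidefinite matrix A = EG̃E. Then Σ_{i=1}^{n} (μᵢ/(τ + μᵢ))² = τ⁻² { tr((D⁺B(τ))²) + tr(((Q₀₁(τ))⁻¹Q₁₂(τ))²) − 2 tr((Q₀₁(τ))⁻¹Q₂₃(τ)) }. -/

import Mathlib

open Matrix

/-- Equation (T2-final) of the paper: With the Woodbury setup and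
`A = EG̃E` real symmetric positive semidefinite with eigenvalues `μ₁, …, μₙ`,
`Σᵢ (μᵢ/(τ + μᵢ))² = τ⁻²{tr((D⁺B(τ))²) + tr(((Q₀₁(τ))⁻¹Q₁₂(τ))²) − 2tr((Q₀₁(τ))⁻¹Q₂₃(τ))}`. -/
theorem T2_final
    (n p : ℕ) (hp : p < n) (τ : ℝ) (hτ : 0 < τ)
    (d : Fin n → ℝ) (hd : ∀ i, 0 ≤ d i)
    (Dplus : Matrix (Fin n) (Fin n) ℝ) (hD : Dplus = Matrix.diagonal d)
    (E : Matrix (Fin n) (Fin n) ℝ) (hE : E = Matrix.diagonal (fun i => Real.sqrt (d i)))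
    (B : Matrix (Fin n) (Fin n) ℝ)
    (hB : B = ((1 : Matrix (Fin n) (Fin n) ℝ) + τ⁻¹ • Dplus)⁻¹)
    (Xt : Matrix (Fin n) (Fin p) ℝ) (hX : IsUnit (Xtᵀ * Xt).det)
    (Gt : Matrix (Fin n) (Fin n) ℝ)
    (hGt : Gt = (1 : Matrix (Fin n) (Fin n) ℝ) - Xt * (Xtᵀ * Xt)⁻¹ * Xtᵀ)
    (Q : ℕ → ℕ → Matrix (Fin p) (Fin p) ℝ)
    (hQ : ∀ i j, Q i j = Xtᵀ * Dplus ^ i * B ^ j * Xt)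
    (hQinv : IsUnit (Q 0 1).det)
    (A : Matrix (Fin n) (Fin n) ℝ) (hAdef : A = E * Gt * E)
    (hA : A.PosSemidef) :
    ∑ i : Fin n, (hA.isHermitian.eigenvalues i / (τ + hA.isHermitian.eigenvalues i)) ^ 2 =
      (τ ^ 2)⁻¹ * (((Dplus * B) * (Dplus * B)).trace
        + (((Q 0 1)⁻¹ * Q 1 2) * ((Q 0 1)⁻¹ * Q 1 2)).trace
        - 2 * ((Q 0 1)⁻¹ * Q 2 3).trace) := by
  have hτ' : τ ≠ 0 := ne_of_gt hτ
  -- B is diagonal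
  set b : Fin n → ℝ := fun i => (1 + τ⁻¹ * d i)⁻¹ with hb
  have hbpos : ∀ i, 0 < 1 + τ⁻¹ * d i := fun i =>
    add_pos_of_pos_of_nonneg one_pos (mul_nonneg (le_of_lt (inv_pos.mpr hτ)) (hd i))
  have hBd : B = Matrix.diagonal b := by
    have h0 : (1 : Matrix (Fin n) (Fin n) ℝ) + τ⁻¹ • Dplus
        = diagonal (fun i => 1 + τ⁻¹ * d i) := by
      rw [hD, ← diagonal_one, ← diagonal_smul, ← diagonal_add]
      rfl
    rw [hB, h0]
    refine inv_eq_right_inv ?_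
    rw [diagonal_mul_diagonal]
    have h1 : (fun i => (1 + τ⁻¹ * d i) * b i) = fun _ => (1:ℝ) :=
      funext fun i => mul_inv_cancel₀ (ne_of_gt (hbpos i))
    rw [h1, diagonal_one]
  -- core diagonal identities
  have hsq : ∀ i, Real.sqrt (d i) * Real.sqrt (d i) = d i :=
    fun i => Real.mul_self_sqrt (hd i)
  have c1 : E * (B * E) = Dplus * B := by
    rw [hE, hBd, hD]
    simp only [diagonal_mul_diagonal]
    refine congrArg diagonal (funext fun i => ?_)
    linear_combination (b i) * hsq i
  have c2 : E * (B * (B * E)) = Dplus * (B * B) := by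
    rw [hE, hBd, hD]
    simp only [diagonal_mul_diagonal]
    refine congrArg diagonal (funext fun i => ?_)
    linear_combination (b i * b i) * hsq i
  have c3 : E * (B * (Dplus * (B * (B * E)))) = Dplus * (Dplus * (B * (B * B))) := by
    rw [hE, hBd, hD]
    simp only [diagonal_mul_diagonal]
    refine congrArg diagonal (funext fun i => ?_)
    linear_combination (d i * (b i * (b i * b i))) * hsq i
  have hf2 : Dplus * B = τ • ((1 : Matrix (Fin n) (Fin n) ℝ) - B) := by
    rw [hD, hBd, diagonal_mul_diagonal]
    ext i j
    rcases eq_or_ne i j with rfl | hij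
    · simp only [diagonal_apply_eq, Matrix.smul_apply, Matrix.sub_apply, one_apply_eq, smul_eq_mul, hb]
      have h := ne_of_gt (hbpos i)
      linear_combination τ * mul_inv_cancel₀ h
        - (d i * (1 + τ⁻¹ * d i)⁻¹) * mul_inv_cancel₀ hτ'
    · simp [diagonal_apply_ne _ hij, one_apply_ne hij]
  have hf1 : (τ • (1 : Matrix (Fin n) (Fin n) ℝ) + Dplus) * B
      = τ • (1 : Matrix (Fin n) (Fin n) ℝ) := by
    rw [add_mul, smul_mul_assoc, one_mul, hf2, smul_sub]
    abel
  have hEE : E * E = Dplus := by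
    rw [hE, hD, diagonal_mul_diagonal]
    exact congrArg diagonal (funext fun i => hsq i)
  -- S and Q facts
  have hSi : ∀ (W : Matrix (Fin p) (Fin n) ℝ), (Xtᵀ * Xt)⁻¹ * ((Xtᵀ * Xt) * W) = W :=
    fun W => nonsing_inv_mul_cancel_left _ _ hX
  have hQc : ∀ (W : Matrix (Fin p) (Fin n) ℝ), Q 0 1 * ((Q 0 1)⁻¹ * W) = W :=
    fun W => mul_nonsing_inv_cancel_left _ _ hQinv
  have hQ01 : Q 0 1 = Xtᵀ * (B * Xt) := by
    rw [hQ]; simp [Matrix.mul_assoc]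
  have hQ12 : Q 1 2 = Xtᵀ * (Dplus * (B * (B * Xt))) := by
    rw [hQ]; simp [pow_succ, pow_zero, Matrix.one_mul, Matrix.mul_assoc]
  have hQ23 : Q 2 3 = Xtᵀ * (Dplus * (Dplus * (B * (B * (B * Xt))))) := by
    rw [hQ]; simp [pow_succ, pow_zero, Matrix.one_mul, Matrix.mul_assoc]
  -- tail versions
  have c1W : ∀ (W : Matrix (Fin n) (Fin n) ℝ),
      E * (B * (E * W)) = Dplus * (B * W) := by
    intro W
    calc E * (B * (E * W)) = (E * (B * E)) * W := by simp only [Matrix.mul_assoc]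
    _ = Dplus * (B * W) := by rw [c1, Matrix.mul_assoc]
  have hDBW : ∀ (W : Matrix (Fin n) (Fin n) ℝ),
      Dplus * (B * W) = τ • W - τ • (B * W) := by
    intro W
    calc Dplus * (B * W) = (Dplus * B) * W := by rw [Matrix.mul_assoc]
    _ = τ • W - τ • (B * W) := by
        rw [hf2, smul_mul_assoc, sub_mul, one_mul, smul_sub]
  have hmidW : ∀ (W : Matrix (Fin p) (Fin n) ℝ),
      Xtᵀ * (E * (B * (E * (Xt * W))))
        = τ • ((Xtᵀ * Xt) * W) - τ • (Q 0 1 * W) := by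
    intro W
    rw [c1W (Xt * W), hDBW (Xt * W), Matrix.mul_sub, Matrix.mul_smul, Matrix.mul_smul, hQ01]
    simp only [Matrix.mul_assoc]
  -- the Woodbury inverse
  set G : Matrix (Fin p) (Fin n) ℝ := (Q 0 1)⁻¹ * (Xtᵀ * (E * B)) with hG
  set L : Matrix (Fin n) (Fin n) ℝ := E * (Xt * G) with hL
  set K : Matrix (Fin n) (Fin n) ℝ := B * L with hK
  set R : Matrix (Fin n) (Fin n) ℝ := τ⁻¹ • B + (τ^2)⁻¹ • K with hR
  set F : Matrix (Fin n) (Fin n) ℝ := E * (Xt * ((Xtᵀ * Xt)⁻¹ * (Xtᵀ * E))) with hF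
  have hA' : A = Dplus - F := by
    rw [hAdef, hGt, mul_sub, mul_one, sub_mul, hEE, hF]
    congr 1
    simp only [Matrix.mul_assoc]
  have hτ2 : ((τ^2)⁻¹ * τ) = τ⁻¹ := by
    rw [pow_two, mul_inv]
    field_simp
  have e1 : (τ • (1 : Matrix (Fin n) (Fin n) ℝ) + Dplus) * (τ⁻¹ • B) = 1 := by
    rw [mul_smul_comm, hf1, smul_smul, inv_mul_cancel₀ hτ', one_smul]
  have e2 : (τ • (1 : Matrix (Fin n) (Fin n) ℝ) + Dplus) * ((τ^2)⁻¹ • K) = τ⁻¹ • L := by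
    rw [mul_smul_comm, hK, ← Matrix.mul_assoc, hf1, smul_mul_assoc, one_mul, smul_smul, hτ2]
  have e3 : F * (τ⁻¹ • B) = τ⁻¹ • (E * (Xt * ((Xtᵀ * Xt)⁻¹ * (Xtᵀ * (E * B))))) := by
    rw [mul_smul_comm]
    congr 1
    rw [hF]
    simp only [Matrix.mul_assoc]
  have e4 : F * ((τ^2)⁻¹ • K)
      = τ⁻¹ • L - τ⁻¹ • (E * (Xt * ((Xtᵀ * Xt)⁻¹ * (Xtᵀ * (E * B))))) := by
    have hFK : F * K = E * (Xt * ((Xtᵀ * Xt)⁻¹ * (Xtᵀ * (E * (B * (E * (Xt * G))))))) := by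
      rw [hF, hK, hL]
      simp only [Matrix.mul_assoc]
    rw [mul_smul_comm, hFK, hmidW G, Matrix.mul_sub, Matrix.mul_smul, Matrix.mul_smul,
      hSi, Matrix.mul_sub, Matrix.mul_smul, Matrix.mul_smul, Matrix.mul_sub, Matrix.mul_smul,
      Matrix.mul_smul, hQc, smul_sub, smul_smul, smul_smul, hτ2, hL]
  have h2 : (τ • (1 : Matrix (Fin n) (Fin n) ℝ) + A) * R = 1 := by
    have hsplit : τ • (1 : Matrix (Fin n) (Fin n) ℝ) + A
        = (τ • (1 : Matrix (Fin n) (Fin n) ℝ) + Dplus) - F := by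
      rw [hA']; abel
    rw [hsplit, hR, sub_mul, mul_add, mul_add, e1, e2, e3, e4]
    abel
  -- spectral side
  set μ : Fin n → ℝ := hA.isHermitian.eigenvalues with hμdef
  have hμ0 : ∀ i, 0 ≤ μ i := fun i => hA.eigenvalues_nonneg i
  have hτμ : ∀ i, τ + μ i ≠ 0 := fun i => ne_of_gt (add_pos_of_pos_of_nonneg hτ (hμ0 i))
  set U : Matrix (Fin n) (Fin n) ℝ :=
    (hA.isHermitian.eigenvectorUnitary : Matrix (Fin n) (Fin n) ℝ) with hUdef
  have hUU : U * star U = 1 :=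
    (Matrix.mem_unitaryGroup_iff).mp hA.isHermitian.eigenvectorUnitary.2
  have hUU' : star U * U = 1 :=
    (Matrix.mem_unitaryGroup_iff').mp hA.isHermitian.eigenvectorUnitary.2
  have hspec : A = U * (diagonal μ * star U) := by
    have h := hA.isHermitian.spectral_theorem
    rw [RCLike.ofReal_real_eq_id, Function.id_comp] at h
    rw [h, Unitary.conjStarAlgAut_apply, Matrix.mul_assoc]
  have key : ∀ f g : Fin n → ℝ,
      (U * (diagonal f * star U)) * (U * (diagonal g * star U))
        = U * (diagonal (fun i => f i * g i) * star U) := by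
    intro f g
    calc (U * (diagonal f * star U)) * (U * (diagonal g * star U))
        = U * (diagonal f * ((star U * U) * (diagonal g * star U))) := by
          simp only [Matrix.mul_assoc]
      _ = U * (diagonal f * (diagonal g * star U)) := by rw [hUU', Matrix.one_mul]
      _ = U * (diagonal (fun i => f i * g i) * star U) := by
          rw [← Matrix.mul_assoc (diagonal f), diagonal_mul_diagonal]
  have hconj : ∀ f : Fin n → ℝ, τ • (U * (diagonal f * star U))
      = U * (diagonal (fun i => τ * f i) * star U) := by
    intro f
    have hds : τ • diagonal f = diagonal (fun i => τ * f i) := by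
      ext i j
      rcases eq_or_ne i j with rfl | hij
      · simp
      · simp [diagonal_apply_ne _ hij, hij]
    rw [← mul_smul_comm, ← smul_mul_assoc, hds]
  set N : Matrix (Fin n) (Fin n) ℝ :=
    U * (diagonal (fun i => (τ + μ i)⁻¹) * star U) with hN
  have h1 : (τ • (1 : Matrix (Fin n) (Fin n) ℝ) + A) * N = 1 := by
    rw [add_mul, smul_mul_assoc, one_mul, hspec, key, hN, hconj, ← Matrix.mul_add,
      ← Matrix.add_mul, diagonal_add]
    have hfun : (fun i => τ * (τ + μ i)⁻¹ + μ i * (τ + μ i)⁻¹) = fun _ => (1:ℝ) :=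
      funext fun i => by rw [← add_mul, mul_inv_cancel₀ (hτμ i)]
    rw [hfun, diagonal_one, Matrix.one_mul, hUU]
  have hNR : N = R := (inv_eq_right_inv h1).symm.trans (inv_eq_right_inv h2)
  -- LHS as a trace
  have hMN : (1 : Matrix (Fin n) (Fin n) ℝ) - τ • N
      = U * (diagonal (fun i => μ i / (τ + μ i)) * star U) := by
    rw [hN, hconj]
    have h1' : (1 : Matrix (Fin n) (Fin n) ℝ) = U * (diagonal (fun _ => (1:ℝ)) * star U) := by
      rw [diagonal_one, Matrix.one_mul, hUU]
    rw [h1', ← Matrix.mul_sub, ← Matrix.sub_mul, diagonal_sub]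
    have hfun : (fun i => (1:ℝ) - τ * (τ + μ i)⁻¹) = fun i => μ i / (τ + μ i) := by
      funext i
      rw [eq_div_iff (hτμ i), sub_mul, one_mul, mul_assoc, inv_mul_cancel₀ (hτμ i), mul_one]
      ring
    rw [hfun]
  have hsum : (((1 : Matrix (Fin n) (Fin n) ℝ) - τ • N)
      * ((1 : Matrix (Fin n) (Fin n) ℝ) - τ • N)).trace
      = ∑ i : Fin n, (μ i / (τ + μ i)) ^ 2 := by
    rw [hMN, key, trace_mul_comm, Matrix.mul_assoc, hUU', Matrix.mul_one, trace_diagonal]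
    exact Finset.sum_congr rfl fun i _ => (sq _).symm
  -- trace identities
  have c2W : E * (B * (B * (E * Xt))) = Dplus * (B * (B * Xt)) := by
    calc E * (B * (B * (E * Xt))) = (E * (B * (B * E))) * Xt := by
          simp only [Matrix.mul_assoc]
    _ = Dplus * (B * (B * Xt)) := by rw [c2]; simp only [Matrix.mul_assoc]
  have c3W : E * (B * (Dplus * (B * (B * (E * Xt)))))
      = Dplus * (Dplus * (B * (B * (B * Xt)))) := by
    calc E * (B * (Dplus * (B * (B * (E * Xt)))))
        = (E * (B * (Dplus * (B * (B * E))))) * Xt := by simp only [Matrix.mul_assoc]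
    _ = _ := by rw [c3]; simp only [Matrix.mul_assoc]
  have tPK : ((Dplus * B) * K).trace = ((Q 0 1)⁻¹ * Q 2 3).trace := by
    have h0 : (Dplus * B) * K = (Dplus * (B * (B * (E * Xt)))) * G := by
      rw [hK, hL]; simp only [Matrix.mul_assoc]
    rw [h0, trace_mul_comm, hG, Matrix.mul_assoc]
    have h1 : (Xtᵀ * (E * B)) * (Dplus * (B * (B * (E * Xt))))
        = Xtᵀ * (E * (B * (Dplus * (B * (B * (E * Xt)))))) := by
      simp only [Matrix.mul_assoc]
    rw [h1, c3W, ← hQ23]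
  have tKP : (K * (Dplus * B)).trace = ((Q 0 1)⁻¹ * Q 2 3).trace := by
    rw [trace_mul_comm, tPK]
  have tKK : (K * K).trace = (((Q 0 1)⁻¹ * Q 1 2) * ((Q 0 1)⁻¹ * Q 1 2)).trace := by
    have hGC : G * (B * (E * Xt)) = (Q 0 1)⁻¹ * Q 1 2 := by
      rw [hG, Matrix.mul_assoc]
      have h1 : Xtᵀ * (E * B) * (B * (E * Xt)) = Xtᵀ * (E * (B * (B * (E * Xt)))) := by
        simp only [Matrix.mul_assoc]
      rw [h1, c2W, ← hQ12]
    have h0 : K * K = (B * (E * Xt)) * (G * ((B * (E * Xt)) * G)) := by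
      rw [hK, hL]; simp only [Matrix.mul_assoc]
    rw [h0, trace_mul_comm]
    have h2 : G * ((B * (E * Xt)) * G) * (B * (E * Xt))
        = (G * (B * (E * Xt))) * (G * (B * (E * Xt))) := by
      simp only [Matrix.mul_assoc]
    rw [h2, hGC]
  -- assemble
  have honeB : (1 : Matrix (Fin n) (Fin n) ℝ) - B = τ⁻¹ • (Dplus * B) := by
    rw [hf2, smul_smul, inv_mul_cancel₀ hτ', one_smul]
  have hMR : (1 : Matrix (Fin n) (Fin n) ℝ) - τ • R = τ⁻¹ • (Dplus * B) - τ⁻¹ • K := by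
    have ht : τ * (τ^2)⁻¹ = τ⁻¹ := by
      rw [pow_two, mul_inv, ← mul_assoc, mul_inv_cancel₀ hτ', one_mul]
    rw [hR, smul_add, smul_smul, mul_inv_cancel₀ hτ', one_smul, smul_smul, ht,
      sub_add_eq_sub_sub, honeB]
  calc ∑ i : Fin n, (μ i / (τ + μ i)) ^ 2
      = (((1 : Matrix (Fin n) (Fin n) ℝ) - τ • N)
        * ((1 : Matrix (Fin n) (Fin n) ℝ) - τ • N)).trace := hsum.symm
    _ = ((τ⁻¹ • (Dplus * B) - τ⁻¹ • K) * (τ⁻¹ • (Dplus * B) - τ⁻¹ • K)).trace := by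
        rw [hNR, hMR]
    _ = (τ ^ 2)⁻¹ * (((Dplus * B) * (Dplus * B)).trace
        + (((Q 0 1)⁻¹ * Q 1 2) * ((Q 0 1)⁻¹ * Q 1 2)).trace
        - 2 * ((Q 0 1)⁻¹ * Q 2 3).trace) := by
        simp only [Matrix.sub_mul, Matrix.mul_sub, smul_mul_assoc, mul_smul_comm, smul_smul,
          trace_sub, trace_smul, smul_eq_mul]
        rw [tPK, tKP, tKK]
        field_simp
        ring
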